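/- For density matrices ρ and σ, the maximum of Re(Tr(σ^{1/2} ρ^{1/2} U)) over all contractions U (‖U‖ ≤ 1) equals the fidelity F(ρ,σ) = Tr(√(σ^{1/2} ρ σ^{1/2})). -/

import Mathlib

open Matrix BigOperators Finset ComplexOrder

variable {d n : ℕ}

open Classical in
/-- The positive semidefinite square root (zero if not PSD). -/
noncomputable def psqrt (A : Matrix (Fin d) (Fin d) ℂ) : Matrix (Fin d) (Fin d) ℂ :=
  if h : A.PosSemidef then
    h.1.eigenvectorUnitary.1 * diagonal ((↑) ∘ (Real.sqrt ∘ h.1.eigenvalues)) *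
      (star h.1.eigenvectorUnitary : Matrix (Fin d) (Fin d) ℂ) else 0

/-- Trace norm ‖A‖₁ = Tr √(A*A). -/
noncomputable def traceNorm (A : Matrix (Fin d) (Fin d) ℂ) : ℝ :=
  ((psqrt (Aᴴ * A)).trace).re

/-- Fidelity F(ρ,σ) = Tr √(σ^{1/2} ρ σ^{1/2}). -/
noncomputable def fid (ρ σ : Matrix (Fin d) (Fin d) ℂ) : ℝ :=
  ((psqrt (psqrt σ * ρ * psqrt σ)).trace).re

/-- Density matrix: positive semidefinite with unit trace. -/
def IsDensity (ρ : Matrix (Fin d) (Fin d) ℂ) : Prop := ρ.PosSemidef ∧ ρ.trace = 1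

/-- Contraction: spectral norm at most one, i.e. 1 - UᴴU ⪰ 0. -/
def IsContraction (U : Matrix (Fin d) (Fin d) ℂ) : Prop := (1 - Uᴴ * U).PosSemidef

/-- Probability vector. -/
def IsProbVec (p : Fin n → ℝ) : Prop := (∀ i, 0 ≤ p i) ∧ ∑ i, p i = 1

/-! ### Auxiliary lemmas -/

/-- Cauchy–Schwarz for the complex dot product. -/
lemma aux_dot_cs (w u : Fin d → ℂ) :
    ‖star w ⬝ᵥ u‖ ≤ Real.sqrt (star w ⬝ᵥ w).re * Real.sqrt (star u ⬝ᵥ u).re := by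
  let x : EuclideanSpace ℂ (Fin d) := (WithLp.equiv 2 _).symm w
  let y : EuclideanSpace ℂ (Fin d) := (WithLp.equiv 2 _).symm u
  have hxy : (inner ℂ x y : ℂ) = star w ⬝ᵥ u := by
    simp [x, y, PiLp.inner_apply, dotProduct, RCLike.inner_apply, mul_comm]
  have hgen : ∀ a b : Fin d → ℂ, inner ℂ ((WithLp.equiv 2 _).symm a : EuclideanSpace ℂ (Fin d))
      ((WithLp.equiv 2 _).symm b) = star a ⬝ᵥ b := by
    intro a b
    simp [PiLp.inner_apply, dotProduct, RCLike.inner_apply, mul_comm]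
  have hxx : ‖x‖ = Real.sqrt (star w ⬝ᵥ w).re := by
    rw [@norm_eq_sqrt_re_inner ℂ]
    congr 1
    exact congrArg Complex.re (hgen w w)
  have hyy : ‖y‖ = Real.sqrt (star u ⬝ᵥ u).re := by
    rw [@norm_eq_sqrt_re_inner ℂ]
    congr 1
    exact congrArg Complex.re (hgen u u)
  calc ‖star w ⬝ᵥ u‖ = ‖(inner ℂ x y : ℂ)‖ := by rw [hxy]
    _ ≤ ‖x‖ * ‖y‖ := norm_inner_le_norm x y
    _ = _ := by rw [hxx, hyy]

lemma aux_contraction_dot {U : Matrix (Fin d) (Fin d) ℂ} (hU : IsContraction U)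
    (x : Fin d → ℂ) : (star (U *ᵥ x) ⬝ᵥ (U *ᵥ x)).re ≤ (star x ⬝ᵥ x).re := by
  have h := hU.dotProduct_mulVec_nonneg x
  rw [sub_mulVec, one_mulVec, dotProduct_sub] at h
  have h2 : star x ⬝ᵥ ((Uᴴ * U) *ᵥ x) = star (U *ᵥ x) ⬝ᵥ (U *ᵥ x) := by
    rw [← mulVec_mulVec, dotProduct_mulVec, star_mulVec]
  rw [h2] at h
  have := (Complex.le_def.mp h).1
  simp only [Complex.zero_re, Complex.sub_re] at this
  linarith

/-- Diagonal entry of a conjugated matrix as a dot product. -/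
lemma aux_conj_diag (C V : Matrix (Fin d) (Fin d) ℂ) (i : Fin d) :
    (Vᴴ * (C * V)) i i = star (fun j => V j i) ⬝ᵥ (C *ᵥ fun j => V j i) := by
  simp only [mul_apply, conjTranspose_apply, dotProduct, mulVec, Pi.star_apply,
    Finset.sum_mul, Finset.mul_sum]


/-- One minus a conjugated diagonal. -/
lemma aux_one_sub (V : Matrix (Fin d) (Fin d) ℂ) (hV1 : V * Vᴴ = 1) (f : Fin d → ℂ) :
    1 - V * (diagonal f * Vᴴ) = V * (diagonal (fun i => 1 - f i) * Vᴴ) := by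
  have h : (diagonal (fun i => (1 : ℂ) - f i) : Matrix (Fin d) (Fin d) ℂ)
      = diagonal (fun _ : Fin d => (1 : ℂ)) - diagonal f := by
    rw [diagonal_sub]
  rw [h, Matrix.sub_mul, Matrix.mul_sub, diagonal_one, one_mul, hV1]

/-- Product of conjugated diagonals. -/
lemma aux_sandwich_mul (V : Matrix (Fin d) (Fin d) ℂ) (hV2 : Vᴴ * V = 1) (a b : Fin d → ℂ) :
    (V * (diagonal a * Vᴴ)) * (V * (diagonal b * Vᴴ))
      = V * (diagonal (fun i => a i * b i) * Vᴴ) := by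
  have hcan : ∀ X : Matrix (Fin d) (Fin d) ℂ, Vᴴ * (V * X) = X := fun X => by
    rw [← mul_assoc, hV2, one_mul]
  calc (V * (diagonal a * Vᴴ)) * (V * (diagonal b * Vᴴ))
      = V * (diagonal a * (Vᴴ * (V * (diagonal b * Vᴴ)))) := by simp only [mul_assoc]
    _ = V * (diagonal a * (diagonal b * Vᴴ)) := by rw [hcan]
    _ = _ := by rw [← mul_assoc (diagonal a), diagonal_mul_diagonal]

lemma aux_psqrt_psd {A : Matrix (Fin d) (Fin d) ℂ} (hA : A.PosSemidef) :
    (psqrt A).PosSemidef ∧ psqrt A * psqrt A = A := by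
  rw [psqrt, dif_pos hA]
  set U := hA.1.eigenvectorUnitary
  have hU : (star U : Matrix (Fin d) (Fin d) ℂ) * U = 1 := (Unitary.mem_iff.mp U.2).1
  constructor
  · have := (PosSemidef.diagonal (d := ((↑) ∘ (Real.sqrt ∘ hA.1.eigenvalues) : Fin d → ℂ))
      (fun i => by simp [Real.sqrt_nonneg])).mul_mul_conjTranspose_same (U : Matrix (Fin d) (Fin d) ℂ)
    convert this using 2
    rw [star_eq_conjTranspose]
  · calc (U : Matrix (Fin d) (Fin d) ℂ) * diagonal ((↑) ∘ (Real.sqrt ∘ hA.1.eigenvalues)) *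
          (star U : Matrix (Fin d) (Fin d) ℂ) *
          ((U : Matrix (Fin d) (Fin d) ℂ) * diagonal ((↑) ∘ (Real.sqrt ∘ hA.1.eigenvalues)) *
          (star U : Matrix (Fin d) (Fin d) ℂ))
        = (U : Matrix (Fin d) (Fin d) ℂ) * (diagonal ((↑) ∘ (Real.sqrt ∘ hA.1.eigenvalues)) *
          diagonal ((↑) ∘ (Real.sqrt ∘ hA.1.eigenvalues))) * (star U : Matrix (Fin d) (Fin d) ℂ) := by
          simp only [mul_assoc]
          rw [← mul_assoc (star U : Matrix (Fin d) (Fin d) ℂ) U, hU, one_mul]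
      _ = A := by
          rw [diagonal_mul_diagonal]
          conv_rhs => rw [hA.1.spectral_theorem, Unitary.conjStarAlgAut_apply]
          congr 3
          funext i
          simp [← Complex.ofReal_mul, Real.mul_self_sqrt (hA.eigenvalues_nonneg i)]

/-- The maximum of Re Tr(σ^{1/2} ρ^{1/2} U) over contractions U equals F(ρ,σ). -/
theorem fidelity_eq_max_re_trace (ρ σ : Matrix (Fin d) (Fin d) ℂ)
    (hρ : IsDensity ρ) (hσ : IsDensity σ) :
    IsGreatest {x : ℝ | ∃ U : Matrix (Fin d) (Fin d) ℂ,
      IsContraction U ∧ x = ((psqrt σ * psqrt ρ * U).trace).re} (fid ρ σ) := by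
  obtain ⟨hρp, -⟩ := hρ
  obtain ⟨hσp, -⟩ := hσ
  set R := psqrt ρ with hRdef
  set S := psqrt σ with hSdef
  have hReq := aux_psqrt_psd hρp
  have hSeq := aux_psqrt_psd hσp
  have hRps : R.PosSemidef := hReq.1
  have hSps : S.PosSemidef := hSeq.1
  have hRR : R * R = ρ := hReq.2
  set A := S * R with hAdef
  have hAH : Aᴴ = R * S := by rw [hAdef, conjTranspose_mul, hRps.1, hSps.1]
  have hMeq : A * Aᴴ = S * ρ * S := by
    rw [hAdef, hAH, mul_assoc, ← mul_assoc R R S, hRR, ← mul_assoc]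
  have hM : (S * ρ * S).PosSemidef := by
    have := hρp.mul_mul_conjTranspose_same S
    rwa [hSps.1] at this
  -- spectral data
  set V : Matrix (Fin d) (Fin d) ℂ := (hM.1.eigenvectorUnitary : Matrix (Fin d) (Fin d) ℂ)
    with hVdef
  set e : Fin d → ℝ := hM.1.eigenvalues with hedef
  have he0 : ∀ i, 0 ≤ e i := hM.eigenvalues_nonneg
  have hV2 : Vᴴ * V = 1 := by
    rw [← star_eq_conjTranspose]
    exact (Unitary.mem_iff.mp hM.1.eigenvectorUnitary.2).1
  have hV1 : V * Vᴴ = 1 := by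
    rw [← star_eq_conjTranspose]
    exact (Unitary.mem_iff.mp hM.1.eigenvectorUnitary.2).2
  have hcanl : ∀ X : Matrix (Fin d) (Fin d) ℂ, Vᴴ * (V * X) = X := fun X => by
    rw [← mul_assoc, hV2, one_mul]
  have hspec : S * ρ * S = V * (diagonal (fun i => (e i : ℂ)) * Vᴴ) := by
    have := hM.1.spectral_theorem
    rw [Unitary.conjStarAlgAut_apply, star_eq_conjTranspose] at this
    rw [this, mul_assoc]
    rfl
  have hKspec : A * Aᴴ = V * (diagonal (fun i => (e i : ℂ)) * Vᴴ) := by rw [hMeq, hspec]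
  -- trace of conjugated diagonal
  have htr : ∀ f : Fin d → ℂ, (V * (diagonal f * Vᴴ)).trace = ∑ i, f i := by
    intro f
    rw [← mul_assoc, trace_mul_cycle, hV2, one_mul, trace_diagonal]
  -- fidelity value
  have hsqrtform : hM.1.eigenvectorUnitary.1 * diagonal ((↑) ∘ (Real.sqrt ∘ hM.1.eigenvalues)) *
      (star hM.1.eigenvectorUnitary : Matrix (Fin d) (Fin d) ℂ)
      = V * (diagonal (fun i => (Real.sqrt (e i) : ℂ)) * Vᴴ) := by
    rw [mul_assoc]
    rfl
  have hfid : fid ρ σ = ∑ i, Real.sqrt (e i) := by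
    show ((psqrt (S * ρ * S)).trace).re = _
    rw [psqrt, dif_pos hM, hsqrtform, htr]
    rw [Complex.re_sum]
    exact Finset.sum_congr rfl fun i _ => Complex.ofReal_re _
  -- eigenvector columns
  have hMv : ∀ i, (A * Aᴴ) *ᵥ (fun j => V j i) = (e i : ℂ) • (fun j => V j i) := by
    intro i
    have hMV : (A * Aᴴ) * V = V * diagonal (fun i => (e i : ℂ)) := by
      rw [hKspec]
      simp only [mul_assoc]
      rw [hV2, mul_one]
    funext j
    have h1 : ((A * Aᴴ) *ᵥ fun j => V j i) j = ((A * Aᴴ) * V) j i := by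
      simp [mulVec, dotProduct, mul_apply]
    rw [h1, hMV, mul_diagonal]
    simp [Pi.smul_apply, smul_eq_mul]
    ring
  have hvv : ∀ i, star (fun j => V j i) ⬝ᵥ (fun j => V j i) = 1 := by
    intro i
    have h1 : star (fun j => V j i) ⬝ᵥ (fun j => V j i) = (Vᴴ * V) i i := by
      simp [dotProduct, mul_apply, conjTranspose_apply]
    rw [h1, hV2, one_apply_eq]
  have hww : ∀ i, star (Aᴴ *ᵥ fun j => V j i) ⬝ᵥ (Aᴴ *ᵥ fun j => V j i) = (e i : ℂ) := by
    intro i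
    rw [star_mulVec, conjTranspose_conjTranspose, ← dotProduct_mulVec, mulVec_mulVec, hMv i,
      dotProduct_smul, hvv i, smul_eq_mul, mul_one]
  -- the trace as a sum of dot products
  have htrsum : ∀ U : Matrix (Fin d) (Fin d) ℂ, (A * U).trace
      = ∑ i, star (Aᴴ *ᵥ fun j => V j i) ⬝ᵥ (U *ᵥ fun j => V j i) := by
    intro U
    have h1 : (Vᴴ * (A * U * V)).trace = (A * U).trace := by
      rw [trace_mul_comm, mul_assoc, hV1, mul_one]
    rw [← h1, Matrix.trace]
    refine Finset.sum_congr rfl fun i _ => ?_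
    rw [Matrix.diag_apply, aux_conj_diag]
    rw [← mulVec_mulVec, dotProduct_mulVec (star fun j => V j i) A]
    have h2 : star (fun j => V j i) ᵥ* A = star (Aᴴ *ᵥ fun j => V j i) := by
      rw [star_mulVec, conjTranspose_conjTranspose]
    rw [h2]
  constructor
  · -- membership: the optimal contraction
    set g : Fin d → ℝ := fun i => if e i = 0 then 0 else (Real.sqrt (e i))⁻¹ with hgdef
    have hge : ∀ i, (e i : ℂ) * (g i : ℂ) = (Real.sqrt (e i) : ℂ) := by
      intro i
      by_cases h : e i = 0
      · simp [hgdef, h]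
      · have hpos : 0 < e i := lt_of_le_of_ne (he0 i) (Ne.symm h)
        have hs : Real.sqrt (e i) ≠ 0 := by positivity
        have hr : e i * (g i) = Real.sqrt (e i) := by
          rw [hgdef]
          simp only [h, if_false]
          rw [inv_eq_one_div, mul_one_div, div_eq_iff hs]
          exact (Real.mul_self_sqrt (he0 i)).symm
        calc (e i : ℂ) * (g i : ℂ) = ((e i * g i : ℝ) : ℂ) := by push_cast; ring
          _ = _ := by rw [hr]
    refine ⟨Aᴴ * (V * (diagonal (fun i => (g i : ℂ)) * Vᴴ)), ?_, ?_⟩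
    · -- contraction
      unfold IsContraction
      have hGH : (diagonal (fun i => (g i : ℂ)))ᴴ = diagonal (fun i => (g i : ℂ)) := by
        rw [diagonal_conjTranspose,
          show (star fun i => ((g i : ℝ) : ℂ)) = fun i => ((g i : ℝ) : ℂ) from
            funext fun i => Complex.conj_ofReal _]
      have hXH : (V * (diagonal (fun i => (g i : ℂ)) * Vᴴ))ᴴ
          = V * (diagonal (fun i => (g i : ℂ)) * Vᴴ) := by
        simp only [conjTranspose_mul, conjTranspose_conjTranspose, hGH, mul_assoc]
      have hUU : (Aᴴ * (V * (diagonal (fun i => (g i : ℂ)) * Vᴴ)))ᴴ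
            * (Aᴴ * (V * (diagonal (fun i => (g i : ℂ)) * Vᴴ)))
          = V * (diagonal (fun i => (g i : ℂ) * (e i : ℂ) * (g i : ℂ)) * Vᴴ) := by
        rw [conjTranspose_mul, conjTranspose_conjTranspose, hXH]
        have h7 : V * (diagonal (fun i => (g i : ℂ)) * Vᴴ) * A
              * (Aᴴ * (V * (diagonal (fun i => (g i : ℂ)) * Vᴴ)))
            = V * (diagonal (fun i => (g i : ℂ)) * Vᴴ) * ((A * Aᴴ)
              * (V * (diagonal (fun i => (g i : ℂ)) * Vᴴ))) := by
          simp only [mul_assoc]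
        rw [h7, hKspec, ← mul_assoc,
          aux_sandwich_mul V hV2 (fun i => (g i : ℂ)) (fun i => (e i : ℂ)),
          aux_sandwich_mul V hV2 (fun i => (g i : ℂ) * (e i : ℂ)) (fun i => (g i : ℂ))]
      rw [hUU, aux_one_sub V hV1]
      have hnn : (diagonal (fun i => 1 - (g i : ℂ) * (e i : ℂ) * (g i : ℂ))).PosSemidef := by
        apply Matrix.PosSemidef.diagonal
        intro i
        show (0 : ℂ) ≤ 1 - (g i : ℂ) * (e i : ℂ) * (g i : ℂ)
        have hc : (1 : ℂ) - (g i : ℂ) * (e i : ℂ) * (g i : ℂ)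
            = ((1 - g i * e i * g i : ℝ) : ℂ) := by push_cast; ring
        rw [hc, Complex.zero_le_real]
        rw [hgdef]
        by_cases h : e i = 0
        · simp [h]
        · have hpos : 0 < e i := lt_of_le_of_ne (he0 i) (Ne.symm h)
          simp only [h, if_false]
          rw [show (Real.sqrt (e i))⁻¹ * e i * (Real.sqrt (e i))⁻¹
              = e i / (Real.sqrt (e i) * Real.sqrt (e i)) by ring]
          rw [Real.mul_self_sqrt (he0 i), div_self (ne_of_gt hpos)]
          norm_num
      have h8 := hnn.mul_mul_conjTranspose_same V
      rwa [mul_assoc] at h8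
    · -- value equals fid
      have hAU : A * (Aᴴ * (V * (diagonal (fun i => (g i : ℂ)) * Vᴴ)))
          = V * (diagonal (fun i => ((Real.sqrt (e i) : ℝ) : ℂ)) * Vᴴ) := by
        rw [← mul_assoc, hKspec,
          aux_sandwich_mul V hV2 (fun i => (e i : ℂ)) (fun i => (g i : ℂ))]
        exact congrArg (fun f => V * (diagonal f * Vᴴ)) (funext fun i => hge i)
      rw [hfid, hAU, htr, Complex.re_sum]
      exact (Finset.sum_congr rfl fun i _ => (Complex.ofReal_re _).symm)
  · -- upper bound
    rintro x ⟨U, hU, rfl⟩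
    rw [hfid, htrsum U, Complex.re_sum]
    apply Finset.sum_le_sum
    intro i _
    have h1 : (star (Aᴴ *ᵥ fun j => V j i) ⬝ᵥ (U *ᵥ fun j => V j i)).re
        ≤ ‖star (Aᴴ *ᵥ fun j => V j i) ⬝ᵥ (U *ᵥ fun j => V j i)‖ :=
      Complex.re_le_norm _
    have h2 := aux_dot_cs (Aᴴ *ᵥ fun j => V j i) (U *ᵥ fun j => V j i)
    have h3 : (star (Aᴴ *ᵥ fun j => V j i) ⬝ᵥ (Aᴴ *ᵥ fun j => V j i)).re = e i := by
      rw [hww i]; exact Complex.ofReal_re _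
    have h4 : (star (U *ᵥ fun j => V j i) ⬝ᵥ (U *ᵥ fun j => V j i)).re ≤ 1 := by
      have h5 := aux_contraction_dot hU (fun j => V j i)
      rw [hvv i] at h5
      simpa using h5
    have h6 : Real.sqrt (star (U *ᵥ fun j => V j i) ⬝ᵥ (U *ᵥ fun j => V j i)).re ≤ 1 := by
      calc Real.sqrt _ ≤ Real.sqrt 1 := Real.sqrt_le_sqrt h4
        _ = 1 := Real.sqrt_one
    calc (star (Aᴴ *ᵥ fun j => V j i) ⬝ᵥ (U *ᵥ fun j => V j i)).re
        ≤ ‖star (Aᴴ *ᵥ fun j => V j i) ⬝ᵥ (U *ᵥ fun j => V j i)‖ := h1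
      _ ≤ Real.sqrt (star (Aᴴ *ᵥ fun j => V j i) ⬝ᵥ (Aᴴ *ᵥ fun j => V j i)).re
          * Real.sqrt (star (U *ᵥ fun j => V j i) ⬝ᵥ (U *ᵥ fun j => V j i)).re := h2
      _ ≤ Real.sqrt (star (Aᴴ *ᵥ fun j => V j i) ⬝ᵥ (Aᴴ *ᵥ fun j => V j i)).re * 1 :=
          mul_le_mul_of_nonneg_left h6 (Real.sqrt_nonneg _)
      _ = Real.sqrt (e i) := by rw [mul_one, h3]
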